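/- Assume critical separation: $a_1>a_2$, $b_1>b_2$, $p_1^*,p_2^*\in(0,1)$ with $(a_1-a_2)(b_1-b_2)=(\sqrt{p_1^*}+\sqrt{p_2^*})^2$, and $t\in(0,1)$. Let $\alpha_j^*=(1-t)a_j+tb_j-\sqrt{4p_j^*t(1-t)}$, $\beta_j^*=(1-t)a_j+tb_j+\sqrt{4p_j^*t(1-t)}$ and $x_0^*=\frac{\sqrt{p_1^*}}{\sqrt{p_1^*}+\sqrt{p_2^*}}\cdot\frac{\alpha_2^*+\beta_2^*}{2}+\frac{\sqrt{p_2^*}}{\sqrt{p_1^*}+\sqrt{p_2^*}}\cdot\frac{\alpha_1^*+\beta_1^*}{2}$. Then $(\alpha_1^*-x_0^*)(\beta_1^*-x_0^*)=\frac{p_1^*}{(\sqrt{p_1^*}+\sqrt{p_2^*})^2}\big((1-t)(a_1-a_2)-t(b_1-b_2)\big)^2$ and $(x_0^*-\alpha_2^*)(x_0^*-\beta_2^*)=\frac{p_2^*}{(\sqrt{p_1^*}+\sqrt{p_2^*})^2}\big((1-t)(a_1-a_2)-t(b_1-b_2)\big)^2$. -/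

import Mathlib

theorem stmt_6 (a₁ a₂ b₁ b₂ t p₁ p₂ : ℝ) (ha : a₁ > a₂) (hb : b₁ > b₂)
    (ht : t ∈ Set.Ioo (0:ℝ) 1) (hp₁ : p₁ ∈ Set.Ioo (0:ℝ) 1) (hp₂ : p₂ ∈ Set.Ioo (0:ℝ) 1)
    (hcrit : (a₁ - a₂) * (b₁ - b₂) = (Real.sqrt p₁ + Real.sqrt p₂) ^ 2)
    (α₁ β₁ α₂ β₂ x₀ : ℝ)
    (hα₁ : α₁ = (1 - t) * a₁ + t * b₁ - Real.sqrt (4 * p₁ * t * (1 - t)))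
    (hβ₁ : β₁ = (1 - t) * a₁ + t * b₁ + Real.sqrt (4 * p₁ * t * (1 - t)))
    (hα₂ : α₂ = (1 - t) * a₂ + t * b₂ - Real.sqrt (4 * p₂ * t * (1 - t)))
    (hβ₂ : β₂ = (1 - t) * a₂ + t * b₂ + Real.sqrt (4 * p₂ * t * (1 - t)))
    (hx₀ : x₀ = Real.sqrt p₁ / (Real.sqrt p₁ + Real.sqrt p₂) * ((α₂ + β₂) / 2)
        + Real.sqrt p₂ / (Real.sqrt p₁ + Real.sqrt p₂) * ((α₁ + β₁) / 2)) :
    (α₁ - x₀) * (β₁ - x₀) =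
        p₁ / (Real.sqrt p₁ + Real.sqrt p₂) ^ 2 *
          ((1 - t) * (a₁ - a₂) - t * (b₁ - b₂)) ^ 2 ∧
    (x₀ - α₂) * (x₀ - β₂) =
        p₂ / (Real.sqrt p₁ + Real.sqrt p₂) ^ 2 *
          ((1 - t) * (a₁ - a₂) - t * (b₁ - b₂)) ^ 2 := by
  obtain ⟨ht0, ht1⟩ := ht
  have hs2 : Real.sqrt p₁ ^ 2 = p₁ := Real.sq_sqrt hp₁.1.le
  have hq2 : Real.sqrt p₂ ^ 2 = p₂ := Real.sq_sqrt hp₂.1.le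
  have hu2 : Real.sqrt (4 * p₁ * t * (1 - t)) ^ 2 = 4 * p₁ * t * (1 - t) :=
    Real.sq_sqrt (by nlinarith [mul_pos hp₁.1 (mul_pos ht0 (sub_pos.mpr ht1))])
  have hv2 : Real.sqrt (4 * p₂ * t * (1 - t)) ^ 2 = 4 * p₂ * t * (1 - t) :=
    Real.sq_sqrt (by nlinarith [mul_pos hp₂.1 (mul_pos ht0 (sub_pos.mpr ht1))])
  have hspq : Real.sqrt p₁ + Real.sqrt p₂ > 0 := by
    have := Real.sqrt_pos.mpr hp₁.1
    have := Real.sqrt_nonneg p₂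
    linarith
  have hne : Real.sqrt p₁ + Real.sqrt p₂ ≠ 0 := ne_of_gt hspq
  subst hα₁ hβ₁ hα₂ hβ₂
  set s := Real.sqrt p₁
  set q := Real.sqrt p₂
  set u := Real.sqrt (4 * p₁ * t * (1 - t)) with hu
  set v := Real.sqrt (4 * p₂ * t * (1 - t)) with hv
  have hX : x₀ * (s + q) = s * ((1 - t) * a₂ + t * b₂) + q * ((1 - t) * a₁ + t * b₁) := by
    rw [hx₀]; field_simp; ring
  have hpow : ((s + q) ^ 2 : ℝ) ≠ 0 := pow_ne_zero 2 hne
  constructor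
  · rw [div_mul_eq_mul_div, eq_div_iff hpow]
    linear_combination
      (-(s * (((1 - t) * a₁ + t * b₁) - ((1 - t) * a₂ + t * b₂))
        + (((1 - t) * a₁ + t * b₁) - x₀) * (s + q))) * hX
      + (((1 - t) * a₁ + t * b₁) - ((1 - t) * a₂ + t * b₂)) ^ 2 * hs2
      - (s + q) ^ 2 * hu2 + 4 * p₁ * t * (1 - t) * hcrit
  · rw [div_mul_eq_mul_div, eq_div_iff hpow]
    linear_combination
      ((q * (((1 - t) * a₁ + t * b₁) - ((1 - t) * a₂ + t * b₂))
        + (x₀ - ((1 - t) * a₂ + t * b₂)) * (s + q))) * hX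
      + (((1 - t) * a₁ + t * b₁) - ((1 - t) * a₂ + t * b₂)) ^ 2 * hq2
      - (s + q) ^ 2 * hv2 + 4 * p₂ * t * (1 - t) * hcrit
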